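/- Let Ĝ and G̃ be two distinct but Markov equivalent directed trees on the same vertex set, i.e., two distinct directed trees with the same skeleton. Then Ĝ and G̃ share exactly the same directed edges except for a single directed path between the two root nodes: the unique directed path in Ĝ from rt(Ĝ) to rt(G̃), namely rt(Ĝ) = c_1 → c_2 → ⋯ → c_{r−1} → c_r = rt(G̃), appears in G̃ as the reversed path c_r → c_{r−1} → ⋯ → c_2 → c_1, and every edge of Ĝ not on this path is an edge of G̃ with the same orientation. -/
import Mathlib


noncomputable section

structure DirTree (p : ℕ) where
  par : Fin p → Option (Fin p)
  root : Fin p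
  par_root : par root = none
  root_unique : ∀ i, par i = none → i = root
  depth : Fin p → ℕ
  depth_lt : ∀ i j, par i = some j → depth j < depth i

/-- The skeleton (undirected edge set) of a directed tree. -/
def skel {p : ℕ} (G : DirTree p) : Set (Fin p × Fin p) :=
  {e | G.par e.2 = some e.1 ∨ G.par e.1 = some e.2}

/-- Lemma: Markov equivalent trees differ by a reversed root path.
Two distinct directed trees with the same skeleton share exactly the same directed
edges except for the unique directed path from `rt(Ĝ)` to `rt(G̃)` in `Ĝ`, which is
reversed in `G̃`. -/
theorem markov_equivalent_trees_path_reversal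
    {p : ℕ} (Ghat Gtil : DirTree p)
    (hskel : skel Ghat = skel Gtil) (hne : Ghat.par ≠ Gtil.par) :
    ∃ (r : ℕ) (c : ℕ → Fin p), 2 ≤ r ∧
      c 0 = Ghat.root ∧ c (r - 1) = Gtil.root ∧
      (∀ i, i + 1 < r → Ghat.par (c (i + 1)) = some (c i)) ∧
      (∀ i, i + 1 < r → Gtil.par (c i) = some (c (i + 1))) ∧
      (∀ a b : Fin p, Ghat.par b = some a →
        (¬ ∃ i, i + 1 < r ∧ c i = a ∧ c (i + 1) = b) → Gtil.par b = some a) ∧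
      (∀ a b : Fin p, Gtil.par b = some a →
        (¬ ∃ i, i + 1 < r ∧ c i = b ∧ c (i + 1) = a) → Ghat.par b = some a) := by
  classical
  -- skeleton transfer lemmas
  have hAB : ∀ u v : Fin p, Ghat.par v = some u → Gtil.par v = some u ∨ Gtil.par u = some v := by
    intro u v h
    have hm : (u, v) ∈ skel Ghat := Or.inl h
    rw [hskel] at hm
    exact hm
  have hBA : ∀ u v : Fin p, Gtil.par v = some u → Ghat.par v = some u ∨ Ghat.par u = some v := by
    intro u v h
    have hm : (u, v) ∈ skel Gtil := Or.inl h
    rw [← hskel] at hm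
    exact hm
  have hcyc : ∀ (G : DirTree p) (a b : Fin p), G.par a = some b → G.par b = some a → False := by
    intro G a b h1 h2
    have d1 := G.depth_lt a b h1
    have d2 := G.depth_lt b a h2
    omega
  set f : Fin p → Fin p := fun v => (Gtil.par v).getD v with hf
  set c : ℕ → Fin p := fun n => f^[n] Ghat.root with hcdef
  have hc0 : c 0 = Ghat.root := rfl
  have hcs : ∀ n, c (n + 1) = f (c n) := by
    intro n
    simp [hcdef, Function.iterate_succ_apply']
  have hfix : ∀ v, Gtil.par v = none → f v = v := by
    intro v h; simp [hf, h]
  have hfval : ∀ v w, Gtil.par v = some w → f v = w := by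
    intro v w h; simp [hf, h]
  -- key step: if u is the root or the target of a reversed edge, its Gtil-child is its
  -- Ghat-parent-edge-reversed child
  have hstep0 : ∀ u : Fin p,
      (u = Ghat.root ∨ ∃ w, Ghat.par u = some w ∧ Gtil.par w = some u) →
      ∀ v, Gtil.par u = some v → Ghat.par v = some u := by
    intro u hu v hv
    rcases hBA v u hv with h | h
    · rcases hu with rfl | ⟨w, hw1, hw2⟩
      · rw [Ghat.par_root] at h; cases h
      · rw [hw1] at h
        obtain rfl : w = v := by injection h
        exact (hcyc Gtil _ _ hv hw2).elim
    · exact h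
  -- invariant along the chain
  have hinv : ∀ n, c n = Ghat.root ∨ ∃ u, Ghat.par (c n) = some u ∧ Gtil.par u = some (c n) := by
    intro n
    induction n with
    | zero => exact Or.inl hc0
    | succ n ih =>
      cases hpar : Gtil.par (c n) with
      | none => rw [hcs n, hfix _ hpar]; exact ih
      | some v =>
        right
        have hv : c (n + 1) = v := by rw [hcs n]; exact hfval _ _ hpar
        refine ⟨c n, ?_, ?_⟩
        · rw [hv]; exact hstep0 (c n) ih v hpar
        · rw [hv]; exact hpar
  have hstep : ∀ n, c n ≠ Gtil.root →
      Gtil.par (c n) = some (c (n + 1)) ∧ Ghat.par (c (n + 1)) = some (c n) := by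
    intro n hn
    cases hpar : Gtil.par (c n) with
    | none => exact absurd (Gtil.root_unique _ hpar) hn
    | some v =>
      have hv : c (n + 1) = v := by rw [hcs n]; exact hfval _ _ hpar
      constructor
      · rw [hv]
      · rw [hv]; exact hstep0 (c n) (hinv n) v hpar
  -- termination: the chain reaches Gtil.root
  have hreach : ∃ n, c n = Gtil.root := by
    by_contra hno
    push_neg at hno
    have hdec : ∀ n, Gtil.depth (c n) + n ≤ Gtil.depth (c 0) := by
      intro n
      induction n with
      | zero => omega
      | succ n ih =>
        have hd := Gtil.depth_lt _ _ ((hstep n (hno n)).1)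
        omega
    have := hdec (Gtil.depth (c 0) + 1)
    omega
  -- every target of a reversed edge lies on the chain
  have prop : ∀ d u v, Ghat.depth u < d → Ghat.par v = some u → Gtil.par u = some v →
      ∃ j, c j = u := by
    intro d
    induction d with
    | zero => intro u v h; omega
    | succ d ih =>
      intro u v hd h1 h2
      cases hu : Ghat.par u with
      | none =>
        refine ⟨0, ?_⟩
        rw [hc0, Ghat.root_unique u hu]
      | some w =>
        have hw : Gtil.par w = some u := by
          rcases hAB w u hu with h | h
          · rw [h2] at h
            obtain rfl : v = w := by injection h
            exact (hcyc Ghat v u h1 hu).elim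
          · exact h
        have hdw : Ghat.depth w < d := by
          have := Ghat.depth_lt u w hu
          omega
        obtain ⟨j, hj⟩ := ih w u hdw hu hw
        refine ⟨j + 1, ?_⟩
        rw [hcs j, hj]
        exact hfval _ _ hw
  have propMain : ∀ u v, Ghat.par v = some u → Gtil.par u = some v → ∃ j, c j = u :=
    fun u v h1 h2 => prop (Ghat.depth u + 1) u v (by omega) h1 h2
  -- there exists a reversed edge
  have hD : ∃ a b, Ghat.par b = some a ∧ Gtil.par a = some b := by
    rcases Function.ne_iff.mp hne with ⟨v, hv⟩
    cases hg : Ghat.par v with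
    | none =>
      cases ht : Gtil.par v with
      | none => exact absurd (hg.trans ht.symm) hv
      | some w =>
        rcases hBA w v ht with h | h
        · rw [hg] at h; cases h
        · exact ⟨v, w, h, ht⟩
    | some u =>
      cases ht : Gtil.par v with
      | none =>
        rcases hAB u v hg with h | h
        · rw [ht] at h; cases h
        · exact ⟨u, v, hg, h⟩
      | some w =>
        by_cases huw : u = w
        · exact absurd (hg.trans (huw ▸ ht.symm)) hv
        · rcases hBA w v ht with h | h
          · rw [hg] at h
            exact absurd (Option.some.inj h) huw
          · exact ⟨v, w, h, ht⟩
  -- the two roots differ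
  have hroots : Ghat.root ≠ Gtil.root := by
    intro heq
    obtain ⟨a, b, h1, h2⟩ := hD
    obtain ⟨j, hj⟩ := propMain a b h1 h2
    have hall : ∀ n, c n = Ghat.root := by
      intro n
      induction n with
      | zero => exact hc0
      | succ n ih =>
        rw [hcs n, ih, hfix _ (by rw [heq]; exact Gtil.par_root)]
    rw [hall j] at hj
    rw [← hj, heq, Gtil.par_root] at h2
    cases h2
  set N := Nat.find hreach with hN
  have hcN : c N = Gtil.root := Nat.find_spec hreach
  have hlt : ∀ m, m < N → c m ≠ Gtil.root := fun m hm => Nat.find_min hreach hm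
  have hNpos : 1 ≤ N := by
    rcases Nat.eq_zero_or_pos N with h0 | h
    · exfalso
      apply hroots
      rw [← hc0, ← hcN, h0]
    · exact h
  have hafter : ∀ n, N ≤ n → c n = Gtil.root := by
    intro n hn
    induction n, hn using Nat.le_induction with
    | base => exact hcN
    | succ n hn ih => rw [hcs n, ih, hfix _ Gtil.par_root]
  -- every reversed edge is on the chain
  have honpath : ∀ a b, Ghat.par b = some a → Gtil.par a = some b →
      ∃ i, i + 1 < N + 1 ∧ c i = a ∧ c (i + 1) = b := by
    intro a b h1 h2
    obtain ⟨j, hj⟩ := propMain a b h1 h2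
    have haroot : a ≠ Gtil.root := by
      intro h
      rw [h, Gtil.par_root] at h2
      cases h2
    have hjN : j < N := by
      by_contra hjn
      exact haroot (hj ▸ hafter j (by omega))
    refine ⟨j, by omega, hj, ?_⟩
    rw [hcs j, hj]
    exact hfval _ _ h2
  refine ⟨N + 1, c, by omega, hc0, by simpa using hcN, ?_, ?_, ?_, ?_⟩
  · intro i hi
    exact (hstep i (hlt i (by omega))).2
  · intro i hi
    exact (hstep i (hlt i (by omega))).1
  · intro a b hab hnot
    rcases hAB a b hab with h | h
    · exact h
    · exact absurd (honpath a b hab h) hnot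
  · intro a b hab hnot
    rcases hBA a b hab with h | h
    · exact h
    · exact absurd (honpath b a h hab) hnot
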